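/- Let T be ergodic and let A ⊆ Ω be an interval. Then for every ε > 0 there exists some d_ε ∈ ℕ such that μ(Ṽ_d(A)) < ε for all d > d_ε (equivalently, lim_{d→∞} μ(Ṽ_d(A)) = 0). -/

import Mathlib

open MeasureTheory Set Filter
open scoped ENNReal

noncomputable section

/-- The vector `(x 0, …, x d)` has ordinal pattern `π = (π 0, …, π d)`. -/
def HasOrdinalPattern {d : ℕ} (x : Fin (d + 1) → ℝ) (π : Equiv.Perm (Fin (d + 1))) : Prop :=
  ∀ l : Fin d, x (π l.succ) < x (π l.castSucc) ∨
    (x (π l.castSucc) = x (π l.succ) ∧ π l.succ < π l.castSucc)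

/-- The element `P_π` of the ordinal partition `P(d)` of order `d`:
points `ω ∈ Ω` such that `(T^[d] ω, T^[d-1] ω, …, T ω, ω)` has ordinal pattern `π`. -/
def ordCell (Ω : Set ℝ) (T : ℝ → ℝ) (d : ℕ) (π : Equiv.Perm (Fin (d + 1))) : Set ℝ :=
  {ω ∈ Ω | HasOrdinalPattern (fun i => T^[d - (i : ℕ)] ω) π}

/-- The element `P_{π₁…π_n}` of the partition `P(d)_n` corresponding to the `(n,d)`-word `w`. -/
def wordCell (Ω : Set ℝ) (T : ℝ → ℝ) (d n : ℕ)
    (w : Fin n → Equiv.Perm (Fin (d + 1))) : Set ℝ :=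
  {ω | ∀ i : Fin n, T^[(i : ℕ)] ω ∈ ordCell Ω T d (w i)}

/-- The set `V_d`. -/
def Vset (Ω : Set ℝ) (T : ℝ → ℝ) (d : ℕ) : Set ℝ :=
  {ω ∈ Ω |
    (ω < T^[d] ω ∧ ∀ l : ℕ, 1 ≤ l → l ≤ d - 1 → T^[l] ω ∉ Set.Ioo ω (T^[d] ω)) ∨
    (T^[d] ω ≤ ω ∧ ∀ l : ℕ, 1 ≤ l → l ≤ d - 1 → T^[l] ω ∉ Set.Icc (T^[d] ω) ω)}

/-- The entropy `H(P(d))` of the ordinal partition of order `d`. -/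
def ordEntropy (μ : Measure ℝ) (Ω : Set ℝ) (T : ℝ → ℝ) (d : ℕ) : ℝ :=
  ∑ π : Equiv.Perm (Fin (d + 1)), Real.negMulLog (μ (ordCell Ω T d π)).toReal

/-- The entropy `H(P(d)_n)` of the partition into `(n,d)`-word cells. -/
def wordEntropy (μ : Measure ℝ) (Ω : Set ℝ) (T : ℝ → ℝ) (d n : ℕ) : ℝ :=
  ∑ w : Fin n → Equiv.Perm (Fin (d + 1)), Real.negMulLog (μ (wordCell Ω T d n w)).toReal

/-- `T` is (strong-)mixing with respect to `μ`. -/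
def Mixing (μ : Measure ℝ) (T : ℝ → ℝ) : Prop :=
  ∀ A B : Set ℝ, MeasurableSet A → MeasurableSet B →
    Tendsto (fun n => μ (T^[n] ⁻¹' A ∩ B)) atTop (nhds (μ A * μ B))

/-- `T` is ergodic with respect to `μ`. -/
def IsErgodicMap (μ : Measure ℝ) (T : ℝ → ℝ) : Prop :=
  ∀ B : Set ℝ, MeasurableSet B → T ⁻¹' B = B → μ B = 0 ∨ μ B = 1

/-- The set `Ṽ_d(A)`. -/
def Vtilde (A : Set ℝ) (T : ℝ → ℝ) (d : ℕ) : Set ℝ :=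
  {ω ∈ A |
    (∀ l : ℕ, 1 ≤ l → l ≤ d - 1 → T^[l] ω ∉ {a ∈ A | a < ω}) ∨
    (∀ l : ℕ, 1 ≤ l → l ≤ d - 1 → T^[l] ω ∉ {a ∈ A | ω < a})}



lemma iterate_preimage_measure' (μ : Measure ℝ) (T : ℝ → ℝ) (hTmeas : Measurable T)
    (hTpres : ∀ B : Set ℝ, MeasurableSet B → μ (T ⁻¹' B) = μ B) :
    ∀ (n : ℕ) (B : Set ℝ), MeasurableSet B → μ (T^[n] ⁻¹' B) = μ B := by
  intro n
  induction n with
  | zero => intro B _; simp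
  | succ n ih =>
    intro B hB
    rw [Function.iterate_succ, Set.preimage_comp, hTpres _ ((hTmeas.iterate n) hB), ih B hB]

lemma avoid_null' (μ : Measure ℝ) [IsProbabilityMeasure μ] (T : ℝ → ℝ)
    (hTmeas : Measurable T)
    (hTpres : ∀ B : Set ℝ, MeasurableSet B → μ (T ⁻¹' B) = μ B)
    (herg : IsErgodicMap μ T)
    (B : Set ℝ) (hB : MeasurableSet B) (hBpos : μ B ≠ 0) :
    μ {ω | ∀ l : ℕ, 1 ≤ l → T^[l] ω ∉ B} = 0 := by
  have hiter : ∀ n : ℕ, Measurable (T^[n]) := fun n => hTmeas.iterate n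
  have hpres := iterate_preimage_measure' μ T hTmeas hTpres
  set U0 : Set ℝ := ⋃ l : ℕ, T^[l + 1] ⁻¹' B with hU0
  have hU0meas : MeasurableSet U0 := MeasurableSet.iUnion fun l => (hiter (l + 1)) hB
  set U : ℕ → Set ℝ := fun n => T^[n] ⁻¹' U0 with hU
  have hUmeas : ∀ n, MeasurableSet (U n) := fun n => (hiter n) hU0meas
  have hUanti : Antitone U := by
    refine antitone_nat_of_succ_le fun n ω hω => ?_
    simp only [hU, hU0, Set.mem_preimage, Set.mem_iUnion] at hω ⊢
    obtain ⟨l, hl⟩ := hω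
    refine ⟨l + 1, ?_⟩
    rw [← Function.iterate_add_apply] at hl ⊢
    have heq : l + 1 + 1 + n = l + 1 + (n + 1) := by omega
    rw [heq]; exact hl
  set W : Set ℝ := ⋂ n, U n with hW
  have hWmeas : MeasurableSet W := MeasurableSet.iInter hUmeas
  have hTU : ∀ n, T ⁻¹' U n = U (n + 1) := by
    intro n
    simp only [hU]
    rw [← Set.preimage_comp, ← Function.iterate_succ]
  have hWinv : T ⁻¹' W = W := by
    have h1 : T ⁻¹' W = ⋂ n, U (n + 1) := by
      rw [hW, Set.preimage_iInter]
      exact Set.iInter_congr hTU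
    rw [h1]
    apply Set.Subset.antisymm
    · intro x hx
      rw [Set.mem_iInter] at hx ⊢
      exact fun n => hUanti (Nat.le_succ n) (hx n)
    · intro x hx
      rw [Set.mem_iInter] at hx ⊢
      exact fun n => hx (n + 1)
  have htendW : Tendsto (fun n => μ (U n)) atTop (nhds (μ W)) :=
    tendsto_measure_iInter_atTop (fun n => (hUmeas n).nullMeasurableSet) hUanti
      ⟨0, measure_ne_top μ _⟩
  have hconst : (fun n => μ (U n)) = fun _ => μ U0 :=
    funext fun n => hpres n U0 hU0meas
  rw [hconst] at htendW
  have hWU0 : μ W = μ U0 := tendsto_nhds_unique htendW tendsto_const_nhds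
  have hU0pos : μ U0 ≠ 0 := by
    intro h
    apply hBpos
    have h1 : μ (T^[0 + 1] ⁻¹' B) = 0 :=
      measure_mono_null (Set.subset_iUnion (fun l : ℕ => T^[l + 1] ⁻¹' B) 0) h
    rw [hpres 1 B hB] at h1
    exact h1
  have hW1 : μ W = 1 := by
    rcases herg W hWmeas hWinv with h | h
    · exact absurd (hWU0 ▸ h) hU0pos
    · exact h
  have hWc : μ Wᶜ = 0 := by
    rw [measure_compl hWmeas (measure_ne_top μ W), hW1, measure_univ, tsub_self]
  refine measure_mono_null ?_ hWc
  intro ω hω hWω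
  have h0 : ω ∈ U 0 := Set.mem_iInter.1 hWω 0
  simp only [hU, hU0, Function.iterate_zero, Set.preimage_id', Set.mem_iUnion,
    Set.mem_preimage] at h0
  obtain ⟨l, hl⟩ := h0
  exact hω (l + 1) (by omega) hl

lemma left_null' (μ : Measure ℝ) [IsProbabilityMeasure μ] (Ω : Set ℝ)
    (hatom : ∀ ω ∈ Ω, μ {ω} = 0)
    (T : ℝ → ℝ) (hTmeas : Measurable T)
    (hTpres : ∀ B : Set ℝ, MeasurableSet B → μ (T ⁻¹' B) = μ B)
    (herg : IsErgodicMap μ T)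
    (A : Set ℝ) (hA : A ⊆ Ω) (hAmeas : MeasurableSet A) :
    μ {ω | ω ∈ A ∧ ∀ l : ℕ, 1 ≤ l → ¬(T^[l] ω ∈ A ∧ T^[l] ω < ω)} = 0 := by
  classical
  set L := {ω | ω ∈ A ∧ ∀ l : ℕ, 1 ≤ l → ¬(T^[l] ω ∈ A ∧ T^[l] ω < ω)} with hLdef
  set N : Set ℝ := ⋃ q : ℚ, if μ (A ∩ Iio (q : ℝ)) = 0 then (∅ : Set ℝ)
      else {ω | ∀ l : ℕ, 1 ≤ l → T^[l] ω ∉ A ∩ Iio (q : ℝ)} with hNdef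
  have hNnull : μ N = 0 := by
    refine measure_iUnion_null fun q => ?_
    by_cases h : μ (A ∩ Iio (q : ℝ)) = 0
    · simp [h]
    · rw [if_neg h]
      exact avoid_null' μ T hTmeas hTpres herg _ (hAmeas.inter measurableSet_Iio) h
  set L' := {ω | ω ∈ A ∧ μ (A ∩ Iio ω) = 0} with hL'def
  have hsub : L ⊆ L' ∪ N := by
    intro ω hω
    by_cases h0 : μ (A ∩ Iio ω) = 0
    · exact Or.inl ⟨hω.1, h0⟩
    · right
      have hq : ∃ q : ℚ, (q : ℝ) < ω ∧ μ (A ∩ Iio (q : ℝ)) ≠ 0 := by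
        by_contra hc
        push_neg at hc
        apply h0
        have hcover : A ∩ Iio ω ⊆ ⋃ q : ℚ, if (q : ℝ) < ω then A ∩ Iio (q : ℝ) else ∅ := by
          rintro x ⟨hxA, hxω⟩
          obtain ⟨q, hq1, hq2⟩ := exists_rat_btwn (show x < ω from hxω)
          exact Set.mem_iUnion.2 ⟨q, by rw [if_pos hq2]; exact ⟨hxA, hq1⟩⟩
        refine measure_mono_null hcover (measure_iUnion_null fun q => ?_)
        by_cases hql : (q : ℝ) < ω
        · rw [if_pos hql]; exact hc q hql
        · simp [hql]
      obtain ⟨q, hqω, hqpos⟩ := hq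
      refine Set.mem_iUnion.2 ⟨q, ?_⟩
      rw [if_neg hqpos]
      rintro l hl ⟨hm1, hm2⟩
      exact hω.2 l hl ⟨hm1, lt_trans hm2 hqω⟩
  have hL'null : μ L' = 0 := by
    refine le_antisymm ?_ zero_le
    set C : Set ℝ := ⋃ q : ℚ, if ∃ ω ∈ L', (q : ℝ) < ω then A ∩ Iio (q : ℝ) else ∅ with hCdef
    have hCnull : μ C = 0 := by
      refine measure_iUnion_null fun q => ?_
      by_cases h : ∃ ω ∈ L', (q : ℝ) < ω
      · rw [if_pos h]
        obtain ⟨ω, hω, hqω⟩ := h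
        exact measure_mono_null (Set.inter_subset_inter_right A (Set.Iio_subset_Iio hqω.le)) hω.2
      · simp [h]
    have hkey : ∀ x y, x ∈ L' \ C → y ∈ L' \ C → x < y → False := by
      intro x y hx hy hxy
      obtain ⟨q, hq1, hq2⟩ := exists_rat_btwn hxy
      apply hx.2
      refine Set.mem_iUnion.2 ⟨q, ?_⟩
      rw [if_pos ⟨y, hy.1, hq2⟩]
      exact ⟨hx.1.1, hq1⟩
    have hss : (L' \ C).Subsingleton := by
      intro x hx y hy
      by_contra hxy
      rcases lt_or_gt_of_ne hxy with h | h
      · exact hkey x y hx hy h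
      · exact hkey y x hy hx h
    have hMnull : μ (L' \ C) = 0 := by
      rcases Set.eq_empty_or_nonempty (L' \ C) with h | ⟨x, hx⟩
      · simp [h]
      · refine measure_mono_null (fun y hy => ?_) (hatom x (hA hx.1.1))
        exact Set.mem_singleton_iff.2 (hss hy hx)
    calc μ L' ≤ μ (C ∪ (L' \ C)) := measure_mono (fun x hx => by
            by_cases h : x ∈ C
            · exact Or.inl h
            · exact Or.inr ⟨hx, h⟩)
      _ ≤ μ C + μ (L' \ C) := measure_union_le _ _
      _ = 0 := by rw [hCnull, hMnull, add_zero]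
  refine le_antisymm ?_ zero_le
  calc μ L ≤ μ (L' ∪ N) := measure_mono hsub
    _ ≤ μ L' + μ N := measure_union_le _ _
    _ = 0 := by rw [hL'null, hNnull, add_zero]

lemma right_null' (μ : Measure ℝ) [IsProbabilityMeasure μ] (Ω : Set ℝ)
    (hatom : ∀ ω ∈ Ω, μ {ω} = 0)
    (T : ℝ → ℝ) (hTmeas : Measurable T)
    (hTpres : ∀ B : Set ℝ, MeasurableSet B → μ (T ⁻¹' B) = μ B)
    (herg : IsErgodicMap μ T)
    (A : Set ℝ) (hA : A ⊆ Ω) (hAmeas : MeasurableSet A) :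
    μ {ω | ω ∈ A ∧ ∀ l : ℕ, 1 ≤ l → ¬(T^[l] ω ∈ A ∧ ω < T^[l] ω)} = 0 := by
  classical
  set L := {ω | ω ∈ A ∧ ∀ l : ℕ, 1 ≤ l → ¬(T^[l] ω ∈ A ∧ ω < T^[l] ω)} with hLdef
  set N : Set ℝ := ⋃ q : ℚ, if μ (A ∩ Ioi (q : ℝ)) = 0 then (∅ : Set ℝ)
      else {ω | ∀ l : ℕ, 1 ≤ l → T^[l] ω ∉ A ∩ Ioi (q : ℝ)} with hNdef
  have hNnull : μ N = 0 := by
    refine measure_iUnion_null fun q => ?_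
    by_cases h : μ (A ∩ Ioi (q : ℝ)) = 0
    · simp [h]
    · rw [if_neg h]
      exact avoid_null' μ T hTmeas hTpres herg _ (hAmeas.inter measurableSet_Ioi) h
  set L' := {ω | ω ∈ A ∧ μ (A ∩ Ioi ω) = 0} with hL'def
  have hsub : L ⊆ L' ∪ N := by
    intro ω hω
    by_cases h0 : μ (A ∩ Ioi ω) = 0
    · exact Or.inl ⟨hω.1, h0⟩
    · right
      have hq : ∃ q : ℚ, ω < (q : ℝ) ∧ μ (A ∩ Ioi (q : ℝ)) ≠ 0 := by
        by_contra hc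
        push_neg at hc
        apply h0
        have hcover : A ∩ Ioi ω ⊆ ⋃ q : ℚ, if ω < (q : ℝ) then A ∩ Ioi (q : ℝ) else ∅ := by
          rintro x ⟨hxA, hxω⟩
          obtain ⟨q, hq1, hq2⟩ := exists_rat_btwn (show ω < x from hxω)
          exact Set.mem_iUnion.2 ⟨q, by rw [if_pos hq1]; exact ⟨hxA, hq2⟩⟩
        refine measure_mono_null hcover (measure_iUnion_null fun q => ?_)
        by_cases hql : ω < (q : ℝ)
        · rw [if_pos hql]; exact hc q hql
        · simp [hql]
      obtain ⟨q, hqω, hqpos⟩ := hq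
      refine Set.mem_iUnion.2 ⟨q, ?_⟩
      rw [if_neg hqpos]
      rintro l hl ⟨hm1, hm2⟩
      exact hω.2 l hl ⟨hm1, lt_trans hqω hm2⟩
  have hL'null : μ L' = 0 := by
    refine le_antisymm ?_ zero_le
    set C : Set ℝ := ⋃ q : ℚ, if ∃ ω ∈ L', ω < (q : ℝ) then A ∩ Ioi (q : ℝ) else ∅ with hCdef
    have hCnull : μ C = 0 := by
      refine measure_iUnion_null fun q => ?_
      by_cases h : ∃ ω ∈ L', ω < (q : ℝ)
      · rw [if_pos h]
        obtain ⟨ω, hω, hqω⟩ := h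
        exact measure_mono_null (Set.inter_subset_inter_right A (Set.Ioi_subset_Ioi hqω.le)) hω.2
      · simp [h]
    have hkey : ∀ x y, x ∈ L' \ C → y ∈ L' \ C → x < y → False := by
      intro x y hx hy hxy
      obtain ⟨q, hq1, hq2⟩ := exists_rat_btwn hxy
      apply hy.2
      refine Set.mem_iUnion.2 ⟨q, ?_⟩
      rw [if_pos ⟨x, hx.1, hq1⟩]
      exact ⟨hy.1.1, hq2⟩
    have hss : (L' \ C).Subsingleton := by
      intro x hx y hy
      by_contra hxy
      rcases lt_or_gt_of_ne hxy with h | h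
      · exact hkey x y hx hy h
      · exact hkey y x hy hx h
    have hMnull : μ (L' \ C) = 0 := by
      rcases Set.eq_empty_or_nonempty (L' \ C) with h | ⟨x, hx⟩
      · simp [h]
      · refine measure_mono_null (fun y hy => ?_) (hatom x (hA hx.1.1))
        exact Set.mem_singleton_iff.2 (hss hy hx)
    calc μ L' ≤ μ (C ∪ (L' \ C)) := measure_mono (fun x hx => by
            by_cases h : x ∈ C
            · exact Or.inl h
            · exact Or.inr ⟨hx, h⟩)
      _ ≤ μ C + μ (L' \ C) := measure_union_le _ _
      _ = 0 := by rw [hCnull, hMnull, add_zero]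
  refine le_antisymm ?_ zero_le
  calc μ L ≤ μ (L' ∪ N) := measure_mono hsub
    _ ≤ μ L' + μ N := measure_union_le _ _
    _ = 0 := by rw [hL'null, hNnull, add_zero]

lemma vtilde_measurable' (A : Set ℝ) (hAmeas : MeasurableSet A) (T : ℝ → ℝ)
    (hTmeas : Measurable T) (d : ℕ) : MeasurableSet (Vtilde A T d) := by
  have hiter : ∀ n : ℕ, Measurable (T^[n]) := fun n => hTmeas.iterate n
  have hS : ∀ l : ℕ, MeasurableSet {ω : ℝ | T^[l] ω ∈ A ∧ T^[l] ω < ω} := by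
    intro l
    have h1 : MeasurableSet (T^[l] ⁻¹' A) := (hiter l) hAmeas
    have h2 : MeasurableSet {ω : ℝ | T^[l] ω < ω} := measurableSet_lt (hiter l) measurable_id
    have : {ω : ℝ | T^[l] ω ∈ A ∧ T^[l] ω < ω} = (T^[l] ⁻¹' A) ∩ {ω : ℝ | T^[l] ω < ω} := rfl
    rw [this]; exact h1.inter h2
  have hS' : ∀ l : ℕ, MeasurableSet {ω : ℝ | T^[l] ω ∈ A ∧ ω < T^[l] ω} := by
    intro l
    have h1 : MeasurableSet (T^[l] ⁻¹' A) := (hiter l) hAmeas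
    have h2 : MeasurableSet {ω : ℝ | ω < T^[l] ω} := measurableSet_lt measurable_id (hiter l)
    have : {ω : ℝ | T^[l] ω ∈ A ∧ ω < T^[l] ω} = (T^[l] ⁻¹' A) ∩ {ω : ℝ | ω < T^[l] ω} := rfl
    rw [this]; exact h1.inter h2
  have key : ∀ (S : ℕ → Set ℝ), (∀ l, MeasurableSet (S l)) →
      MeasurableSet {ω : ℝ | ∀ l : ℕ, 1 ≤ l → l ≤ d - 1 → ω ∉ S l} := by
    intro S hSm
    have heq : {ω : ℝ | ∀ l : ℕ, 1 ≤ l → l ≤ d - 1 → ω ∉ S l}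
        = ⋂ l : ℕ, {ω : ℝ | 1 ≤ l → l ≤ d - 1 → ω ∉ S l} := by
      ext ω; simp [Set.mem_iInter]
    rw [heq]
    refine MeasurableSet.iInter fun l => ?_
    by_cases hl : 1 ≤ l ∧ l ≤ d - 1
    · have : {ω : ℝ | 1 ≤ l → l ≤ d - 1 → ω ∉ S l} = (S l)ᶜ := by
        ext ω
        simp only [Set.mem_setOf_eq, Set.mem_compl_iff]
        constructor
        · intro h; exact h hl.1 hl.2
        · intro h _ _; exact h
      rw [this]; exact (hSm l).compl
    · have : {ω : ℝ | 1 ≤ l → l ≤ d - 1 → ω ∉ S l} = Set.univ := by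
        ext ω
        simp only [Set.mem_setOf_eq, Set.mem_univ, iff_true]
        intro h1 h2
        exact absurd ⟨h1, h2⟩ hl
      rw [this]; exact MeasurableSet.univ
  have heq : Vtilde A T d = A ∩
      ({ω : ℝ | ∀ l : ℕ, 1 ≤ l → l ≤ d - 1 → ω ∉ {x : ℝ | T^[l] x ∈ A ∧ T^[l] x < x}} ∪
       {ω : ℝ | ∀ l : ℕ, 1 ≤ l → l ≤ d - 1 → ω ∉ {x : ℝ | T^[l] x ∈ A ∧ x < T^[l] x}}) := by
    ext ω
    simp only [Vtilde, Set.mem_setOf_eq, Set.mem_inter_iff, Set.mem_union, Set.mem_sep_iff]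
  rw [heq]
  exact hAmeas.inter (MeasurableSet.union (key _ hS) (key _ hS'))

lemma vtilde_antitone' (A : Set ℝ) (T : ℝ → ℝ) : Antitone (Vtilde A T) := by
  intro d d' hdd ω hω
  obtain ⟨hωA, h⟩ := hω
  have hd1 : d - 1 ≤ d' - 1 := Nat.sub_le_sub_right hdd 1
  refine ⟨hωA, ?_⟩
  rcases h with h | h
  · exact Or.inl fun l h1 h2 => h l h1 (h2.trans hd1)
  · exact Or.inr fun l h1 h2 => h l h1 (h2.trans hd1)

theorem measure_Vtilde_small_of_ergodic
    (Ω : Set ℝ) (hΩ : Ω.OrdConnected)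
    (μ : MeasureTheory.Measure ℝ) [MeasureTheory.IsProbabilityMeasure μ] (hμΩ : μ Ω = 1)
    (hatom : ∀ ω ∈ Ω, μ {ω} = 0)
    (T : ℝ → ℝ) (hTmeas : Measurable T) (hTmaps : Set.MapsTo T Ω Ω)
    (hTpres : ∀ B : Set ℝ, MeasurableSet B → μ (T ⁻¹' B) = μ B)
    (herg : IsErgodicMap μ T)
    (A : Set ℝ) (hA : A ⊆ Ω) (hAconn : A.OrdConnected) :
    ∀ ε : ℝ, 0 < ε → ∃ dε : ℕ, ∀ d : ℕ, dε < d → (μ (Vtilde A T d)).toReal < ε := by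
  intro ε hε
  have hAmeas : MeasurableSet A := hAconn.measurableSet
  have hVmeas : ∀ d, MeasurableSet (Vtilde A T d) := vtilde_measurable' A hAmeas T hTmeas
  have hanti : Antitone (Vtilde A T) := vtilde_antitone' A T
  have hiInt : μ (⋂ d, Vtilde A T d) = 0 := by
    have hsub : (⋂ d, Vtilde A T d) ⊆
        {ω | ω ∈ A ∧ ∀ l : ℕ, 1 ≤ l → ¬(T^[l] ω ∈ A ∧ T^[l] ω < ω)} ∪
        {ω | ω ∈ A ∧ ∀ l : ℕ, 1 ≤ l → ¬(T^[l] ω ∈ A ∧ ω < T^[l] ω)} := by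
      intro ω hω
      have hmem : ∀ d : ℕ, ω ∈ Vtilde A T d := Set.mem_iInter.1 hω
      have hωA : ω ∈ A := (hmem 0).1
      by_cases hL : ∀ l : ℕ, 1 ≤ l → ¬(T^[l] ω ∈ A ∧ T^[l] ω < ω)
      · exact Or.inl ⟨hωA, hL⟩
      · push_neg at hL
        obtain ⟨l1, hl1, hl1A, hl1lt⟩ := hL
        refine Or.inr ⟨hωA, fun l hl hcon => ?_⟩
        have hd := (hmem (max l l1 + 1)).2
        have hmax : max l l1 + 1 - 1 = max l l1 := by omega
        rcases hd with hd | hd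
        · exact hd l1 hl1 (by omega) ⟨hl1A, hl1lt⟩
        · exact hd l hl (by omega) ⟨hcon.1, hcon.2⟩
    refine le_antisymm ?_ zero_le
    calc μ (⋂ d, Vtilde A T d)
        ≤ μ ({ω | ω ∈ A ∧ ∀ l : ℕ, 1 ≤ l → ¬(T^[l] ω ∈ A ∧ T^[l] ω < ω)} ∪
            {ω | ω ∈ A ∧ ∀ l : ℕ, 1 ≤ l → ¬(T^[l] ω ∈ A ∧ ω < T^[l] ω)}) := measure_mono hsub
      _ ≤ μ {ω | ω ∈ A ∧ ∀ l : ℕ, 1 ≤ l → ¬(T^[l] ω ∈ A ∧ T^[l] ω < ω)} +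
          μ {ω | ω ∈ A ∧ ∀ l : ℕ, 1 ≤ l → ¬(T^[l] ω ∈ A ∧ ω < T^[l] ω)} := measure_union_le _ _
      _ = 0 := by
          rw [left_null' μ Ω hatom T hTmeas hTpres herg A hA hAmeas,
            right_null' μ Ω hatom T hTmeas hTpres herg A hA hAmeas, add_zero]
  have htend : Tendsto (fun d => μ (Vtilde A T d)) atTop (nhds 0) := by
    have h := tendsto_measure_iInter_atTop (fun d => (hVmeas d).nullMeasurableSet) hanti
      ⟨0, measure_ne_top μ _⟩
    rw [hiInt] at h
    exact h
  have hev : ∀ᶠ d in atTop, μ (Vtilde A T d) < ENNReal.ofReal ε :=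
    htend.eventually_lt_const (ENNReal.ofReal_pos.2 hε)
  obtain ⟨N, hN⟩ := eventually_atTop.1 hev
  exact ⟨N, fun d hd => ENNReal.toReal_lt_of_lt_ofReal (hN d hd.le)⟩


end
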